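/- Let ξ > 0 be such that D_ξ := DᵀD − ξ²I is invertible, let ω ∈ ℝ, and let u, v ∈ ℂ^n. If the column vector [u; v] ∈ ℂ^{2n} satisfies H_ξ(iω)·[u; v] = 0, then the row vector [−v*, u*] ∈ ℂ^{1×2n} satisfies [−v*, u*]·H_ξ(iω) = 0; i.e. [−v*, u*] is a left null vector of H_ξ(iω). -/

import Mathlib

open Matrix Complex

noncomputable section

variable {n nu ny m : ℕ}

/-- `D_ξ = Dᵀ D − ξ² I`. -/
def Dxi (D : Matrix (Fin ny) (Fin nu) ℝ) (ξ : ℝ) : Matrix (Fin nu) (Fin nu) ℝ :=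
  Dᵀ * D - ξ ^ 2 • (1 : Matrix (Fin nu) (Fin nu) ℝ)

/-- `(Dᵀ)_ξ = D Dᵀ − ξ² I`, the matrix denoted `D_ξ^{-T}`-inverse base in the paper
(the only dimensionally consistent reading of the `(2,1)` block of `M₀`).
Note that it is invertible iff `D_ξ` is (for `ξ ≠ 0`), since `DᵀD` and `DDᵀ` have the
same nonzero eigenvalues. -/
def DxiT (D : Matrix (Fin ny) (Fin nu) ℝ) (ξ : ℝ) : Matrix (Fin ny) (Fin ny) ℝ :=
  D * Dᵀ - ξ ^ 2 • (1 : Matrix (Fin ny) (Fin ny) ℝ)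

/-- The block matrix `M₀`. -/
def Mzero (A0 : Matrix (Fin n) (Fin n) ℝ) (B : Matrix (Fin n) (Fin nu) ℝ)
    (C : Matrix (Fin ny) (Fin n) ℝ) (D : Matrix (Fin ny) (Fin nu) ℝ) (ξ : ℝ) :
    Matrix (Fin n ⊕ Fin n) (Fin n ⊕ Fin n) ℝ :=
  fromBlocks (A0 - B * (Dxi D ξ)⁻¹ * Dᵀ * C) (-(B * (Dxi D ξ)⁻¹ * Bᵀ))
    (ξ ^ 2 • (Cᵀ * (DxiT D ξ)⁻¹ * C)) (-A0ᵀ + Cᵀ * D * (Dxi D ξ)⁻¹ * Bᵀ)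

/-- The block matrix `Mᵢ` for `1 ≤ i ≤ m`. -/
def Mpos (Ai : Matrix (Fin n) (Fin n) ℝ) : Matrix (Fin n ⊕ Fin n) (Fin n ⊕ Fin n) ℝ :=
  fromBlocks Ai 0 0 0

/-- The block matrix `M₋ᵢ` for `1 ≤ i ≤ m`. -/
def Mneg (Ai : Matrix (Fin n) (Fin n) ℝ) : Matrix (Fin n ⊕ Fin n) (Fin n ⊕ Fin n) ℝ :=
  fromBlocks 0 0 0 (-Aiᵀ)

/-- `H_ξ(λ) = λI − M₀ − Σᵢ (Mᵢ e^{−λτᵢ} + M₋ᵢ e^{λτᵢ})`. -/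
def Hxi (A0 : Matrix (Fin n) (Fin n) ℝ) (A : Fin m → Matrix (Fin n) (Fin n) ℝ)
    (B : Matrix (Fin n) (Fin nu) ℝ) (C : Matrix (Fin ny) (Fin n) ℝ)
    (D : Matrix (Fin ny) (Fin nu) ℝ) (τ : Fin m → ℝ) (ξ : ℝ) (lam : ℂ) :
    Matrix (Fin n ⊕ Fin n) (Fin n ⊕ Fin n) ℂ :=
  lam • (1 : Matrix (Fin n ⊕ Fin n) (Fin n ⊕ Fin n) ℂ)
    - (Mzero A0 B C D ξ).map Complex.ofReal
    - ∑ i : Fin m, (Complex.exp (-lam * (τ i : ℂ)) • (Mpos (A i)).map Complex.ofReal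
        + Complex.exp (lam * (τ i : ℂ)) • (Mneg (A i)).map Complex.ofReal)

/-- `A(λ) = λI − A₀ − Σᵢ Aᵢ e^{−λτᵢ}`. -/
def Amat (A0 : Matrix (Fin n) (Fin n) ℝ) (A : Fin m → Matrix (Fin n) (Fin n) ℝ)
    (τ : Fin m → ℝ) (lam : ℂ) : Matrix (Fin n) (Fin n) ℂ :=
  lam • (1 : Matrix (Fin n) (Fin n) ℂ) - A0.map Complex.ofReal
    - ∑ i : Fin m, Complex.exp (-lam * (τ i : ℂ)) • (A i).map Complex.ofReal

/-- The transfer function `G(λ) = C A(λ)⁻¹ B + D`. -/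
def Gmat (A0 : Matrix (Fin n) (Fin n) ℝ) (A : Fin m → Matrix (Fin n) (Fin n) ℝ)
    (B : Matrix (Fin n) (Fin nu) ℝ) (C : Matrix (Fin ny) (Fin n) ℝ)
    (D : Matrix (Fin ny) (Fin nu) ℝ) (τ : Fin m → ℝ) (lam : ℂ) :
    Matrix (Fin ny) (Fin nu) ℂ :=
  C.map Complex.ofReal * (Amat A0 A τ lam)⁻¹ * B.map Complex.ofReal + D.map Complex.ofReal

/-- `τ_max`, the maximum of the delays. -/
def tauMax [NeZero m] (τ : Fin m → ℝ) : ℝ :=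
  Finset.univ.sup' Finset.univ_nonempty τ

/-- `λ` is an eigenvalue of the infinite-dimensional operator `L_ξ`: there is a continuously
differentiable, not identically zero function `u : [−τ_max, τ_max] → ℂ^{2n}` with
`u′(t) = λ u(t)` on the interval and `u′(0) = M₀ u(0) + Σᵢ (Mᵢ u(−τᵢ) + M₋ᵢ u(τᵢ))`. -/
def IsEigLxi [NeZero m] (A0 : Matrix (Fin n) (Fin n) ℝ) (A : Fin m → Matrix (Fin n) (Fin n) ℝ)
    (B : Matrix (Fin n) (Fin nu) ℝ) (C : Matrix (Fin ny) (Fin n) ℝ)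
    (D : Matrix (Fin ny) (Fin nu) ℝ) (τ : Fin m → ℝ) (ξ : ℝ) (lam : ℂ) : Prop :=
  ∃ u : ℝ → (Fin n ⊕ Fin n → ℂ),
    (∀ t ∈ Set.Icc (-(tauMax τ)) (tauMax τ),
      HasDerivWithinAt u (lam • u t) (Set.Icc (-(tauMax τ)) (tauMax τ)) t) ∧
    (∃ t ∈ Set.Icc (-(tauMax τ)) (tauMax τ), u t ≠ 0) ∧
    lam • u 0 = (Mzero A0 B C D ξ).map Complex.ofReal *ᵥ u 0
      + ∑ i : Fin m, ((Mpos (A i)).map Complex.ofReal *ᵥ u (-(τ i))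
          + (Mneg (A i)).map Complex.ofReal *ᵥ u (τ i))

/-- The symplectic matrix `J = [[0, -I],[I, 0]]`. -/
def Jmat (n : ℕ) : Matrix (Fin n ⊕ Fin n) (Fin n ⊕ Fin n) ℝ :=
  fromBlocks 0 (-1) 1 0

lemma Jmat_mul_Jmat : Jmat n * Jmat n = -1 := by
  ext i j
  rcases i with i|i <;> rcases j with j|j <;>
    simp [Jmat, fromBlocks_multiply, Matrix.one_apply]

lemma Dxi_transpose (D : Matrix (Fin ny) (Fin nu) ℝ) (ξ : ℝ) : (Dxi D ξ)ᵀ = Dxi D ξ := by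
  simp [Dxi, transpose_sub, transpose_mul, transpose_smul]

lemma DxiT_transpose (D : Matrix (Fin ny) (Fin nu) ℝ) (ξ : ℝ) : (DxiT D ξ)ᵀ = DxiT D ξ := by
  simp [DxiT, transpose_sub, transpose_mul, transpose_smul]

lemma Dxi_inv_transpose (D : Matrix (Fin ny) (Fin nu) ℝ) (ξ : ℝ) :
    ((Dxi D ξ)⁻¹)ᵀ = (Dxi D ξ)⁻¹ := by
  rw [Matrix.transpose_nonsing_inv, Dxi_transpose]

lemma DxiT_inv_transpose (D : Matrix (Fin ny) (Fin nu) ℝ) (ξ : ℝ) :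
    ((DxiT D ξ)⁻¹)ᵀ = (DxiT D ξ)⁻¹ := by
  rw [Matrix.transpose_nonsing_inv, DxiT_transpose]

lemma J_Mzero_J (A0 : Matrix (Fin n) (Fin n) ℝ) (B : Matrix (Fin n) (Fin nu) ℝ)
    (C : Matrix (Fin ny) (Fin n) ℝ) (D : Matrix (Fin ny) (Fin nu) ℝ) (ξ : ℝ) :
    Jmat n * Mzero A0 B C D ξ * Jmat n = (Mzero A0 B C D ξ)ᵀ := by
  rw [Mzero, Jmat, fromBlocks_transpose, fromBlocks_multiply, fromBlocks_multiply]
  have h1 : ((Dxi D ξ)⁻¹)ᵀ = (Dxi D ξ)⁻¹ := Dxi_inv_transpose D ξ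
  have h2 : ((DxiT D ξ)⁻¹)ᵀ = (DxiT D ξ)⁻¹ := DxiT_inv_transpose D ξ
  congr 1
  all_goals simp only [transpose_add, transpose_sub, transpose_neg, transpose_smul, transpose_mul,
    transpose_transpose, h1, h2, Matrix.mul_assoc, Matrix.zero_mul, Matrix.mul_zero,
    Matrix.neg_mul, Matrix.mul_neg, Matrix.one_mul, Matrix.mul_one, neg_neg, zero_add,
    add_zero, zero_sub, sub_zero, neg_zero, neg_add, neg_sub]
  all_goals first | rfl | rw [h2] | abel | (constructor <;> first | rfl | rw [h2] | abel | (constructor <;> first | rfl | rw [h2] | abel))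

lemma J_Mpos_J (Ai : Matrix (Fin n) (Fin n) ℝ) :
    Jmat n * Mpos Ai * Jmat n = (Mneg Ai)ᵀ := by
  simp [Jmat, Mpos, Mneg, fromBlocks_multiply, fromBlocks_transpose]

lemma J_Mneg_J (Ai : Matrix (Fin n) (Fin n) ℝ) :
    Jmat n * Mneg Ai * Jmat n = (Mpos Ai)ᵀ := by
  simp [Jmat, Mpos, Mneg, fromBlocks_multiply, fromBlocks_transpose]

/-- Complex symplectic matrix. -/
def JmatC (n : ℕ) : Matrix (Fin n ⊕ Fin n) (Fin n ⊕ Fin n) ℂ :=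
  fromBlocks 0 (-1) 1 0

lemma JmatC_eq : JmatC n = (Jmat n).map Complex.ofReal := by
  ext i j
  rcases i with i|i <;> rcases j with j|j <;>
    simp [JmatC, Jmat, Matrix.one_apply, apply_ite]

lemma JmatC_mul_JmatC : JmatC n * JmatC n = -1 := by
  ext i j
  rcases i with i|i <;> rcases j with j|j <;>
    simp [JmatC, fromBlocks_multiply, Matrix.one_apply]

lemma conjTranspose_map_ofReal {k l : Type*} (M : Matrix k l ℝ) :
    (M.map Complex.ofReal)ᴴ = Mᵀ.map Complex.ofReal := by
  ext i j
  simp [Matrix.conjTranspose_apply]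

lemma map_mul_ofReal {k : Type*} [Fintype k] (M N : Matrix k k ℝ) :
    (M * N).map Complex.ofReal = M.map Complex.ofReal * N.map Complex.ofReal :=
  Matrix.map_mul (f := Complex.ofRealHom)

lemma JcMJc (M T : Matrix (Fin n ⊕ Fin n) (Fin n ⊕ Fin n) ℝ)
    (hM : Jmat n * M * Jmat n = Tᵀ) :
    JmatC n * M.map Complex.ofReal * JmatC n = (T.map Complex.ofReal)ᴴ := by
  rw [JmatC_eq, ← map_mul_ofReal, ← map_mul_ofReal, hM, conjTranspose_map_ofReal]

lemma Hxi_conjTranspose [NeZero m] (A0 : Matrix (Fin n) (Fin n) ℝ)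
    (A : Fin m → Matrix (Fin n) (Fin n) ℝ) (B : Matrix (Fin n) (Fin nu) ℝ)
    (C : Matrix (Fin ny) (Fin n) ℝ) (D : Matrix (Fin ny) (Fin nu) ℝ)
    (τ : Fin m → ℝ) (ξ : ℝ) (ω : ℝ) :
    (Hxi A0 A B C D τ ξ (Complex.I * ω))ᴴ
      = JmatC n * Hxi A0 A B C D τ ξ (Complex.I * ω) * JmatC n := by
  rw [Hxi]
  rw [Matrix.conjTranspose_sub, Matrix.conjTranspose_sub, Matrix.conjTranspose_sum]
  rw [Matrix.mul_sub, Matrix.mul_sub, Matrix.sub_mul, Matrix.sub_mul,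
    Finset.mul_sum, Finset.sum_mul]
  congr 1
  congr 1
  · -- the `λ • 1` part
    rw [Matrix.conjTranspose_smul, Matrix.conjTranspose_one, Matrix.mul_smul,
      Matrix.mul_one, Matrix.smul_mul, JmatC_mul_JmatC]
    have hstar : star (Complex.I * (ω : ℂ)) = -(Complex.I * (ω : ℂ)) := by
      simp
    rw [hstar, smul_neg, neg_smul]
  · exact (JcMJc _ _ (J_Mzero_J A0 B C D ξ)).symm
  · refine Finset.sum_congr rfl fun i _ => ?_
    rw [Matrix.conjTranspose_add, Matrix.conjTranspose_smul, Matrix.conjTranspose_smul,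
      Matrix.mul_add, Matrix.add_mul, Matrix.mul_smul, Matrix.mul_smul,
      Matrix.smul_mul, Matrix.smul_mul,
      JcMJc _ _ (J_Mpos_J (A i)), JcMJc _ _ (J_Mneg_J (A i))]
    have h1 : star (Complex.exp (-(Complex.I * (ω:ℂ)) * (τ i : ℂ)))
        = Complex.exp (Complex.I * (ω:ℂ) * (τ i : ℂ)) := by
      rw [show (star (Complex.exp (-(Complex.I * (ω:ℂ)) * (τ i : ℂ))) : ℂ)
          = (starRingEnd ℂ) (Complex.exp (-(Complex.I * (ω:ℂ)) * (τ i : ℂ))) from rfl,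
        ← Complex.exp_conj]
      congr 1
      simp
    have h2 : star (Complex.exp (Complex.I * (ω:ℂ) * (τ i : ℂ)))
        = Complex.exp (-(Complex.I * (ω:ℂ)) * (τ i : ℂ)) := by
      rw [show (star (Complex.exp (Complex.I * (ω:ℂ) * (τ i : ℂ))) : ℂ)
          = (starRingEnd ℂ) (Complex.exp (Complex.I * (ω:ℂ) * (τ i : ℂ))) from rfl,
        ← Complex.exp_conj]
      congr 1
      simp
    rw [h1, h2, add_comm]

/-- if `[u; v]` is a (right) null vector of `H_ξ(iω)`, then `[−v*, u*]` is a
left null vector of `H_ξ(iω)`. -/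
theorem left_null_vector_of_Hxi [NeZero n] [NeZero nu] [NeZero ny] [NeZero m]
    (A0 : Matrix (Fin n) (Fin n) ℝ) (A : Fin m → Matrix (Fin n) (Fin n) ℝ)
    (B : Matrix (Fin n) (Fin nu) ℝ) (C : Matrix (Fin ny) (Fin n) ℝ)
    (D : Matrix (Fin ny) (Fin nu) ℝ) (τ : Fin m → ℝ)
    (ξ : ℝ) (hξ : 0 < ξ) (hD : IsUnit (Dxi D ξ)) (ω : ℝ) (u v : Fin n → ℂ)
    (h : Hxi A0 A B C D τ ξ (Complex.I * ω) *ᵥ Sum.elim u v = 0) :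
    Sum.elim (fun i => -(starRingEnd ℂ) (v i)) (fun i => (starRingEnd ℂ) (u i))
        ᵥ* Hxi A0 A B C D τ ξ (Complex.I * ω) = 0 := by
  have hvec : Sum.elim (fun i => -(starRingEnd ℂ) (v i)) (fun i => (starRingEnd ℂ) (u i))
      = star (JmatC n *ᵥ Sum.elim u v) := by
    have h1 : JmatC n *ᵥ Sum.elim u v = Sum.elim (-v) u := by
      rw [JmatC, fromBlocks_mulVec]
      simp [Matrix.neg_mulVec]
    rw [h1]
    funext i
    rcases i with i|i <;> simp
  rw [hvec, ← Matrix.conjTranspose_conjTranspose (Hxi A0 A B C D τ ξ (Complex.I * ω)),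
    ← Matrix.star_mulVec, Hxi_conjTranspose, Matrix.mulVec_mulVec,
    Matrix.mul_assoc (JmatC n * Hxi A0 A B C D τ ξ (Complex.I * ω)),
    JmatC_mul_JmatC, Matrix.mul_neg, Matrix.mul_one, Matrix.neg_mulVec,
    ← Matrix.mulVec_mulVec, h]
  simp
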